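/- Let K ⊆ ℝ^n be compact, A ⊆ ℕ^n finite with ℝ[x]_A being K-full, and d > deg(A). Then the set E_d(y,K) = { z ∈ ℝ^{ℕ^n_d} : z admits a representing measure supported in K and z_α = y_α for all α ∈ A } is a compact convex subset of ℝ^{ℕ^n_d}. -/

import Mathlib

open MeasureTheory


private lemma pad_sum {M : Type*} [AddCommMonoid M] {k N : ℕ} (hk : k ≤ N) (φ : Fin k → M) :
    (∑ i : Fin N, if h : (i : ℕ) < k then φ ⟨i, h⟩ else 0) = ∑ i : Fin k, φ i := by
  rw [Fin.sum_univ_eq_sum_range (fun i => if h : i < k then φ ⟨i, h⟩ else 0) N]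
  rw [← Finset.sum_subset (Finset.range_subset_range.2 hk)
    (fun i _ hi => by rw [dif_neg (by simpa using hi)])]
  rw [← Fin.sum_univ_eq_sum_range (fun i => if h : i < k then φ ⟨i, h⟩ else 0) k]
  exact Finset.sum_congr rfl fun i _ => by rw [dif_pos i.isLt]

/-- Convex hull of a compact set in a finite-dimensional normed space is compact. -/
theorem myIsCompact_convexHull {E : Type u_1} [NormedAddCommGroup E] [NormedSpace ℝ E]
    [FiniteDimensional ℝ E] {s : Set E} (hs : IsCompact s) :
    IsCompact (convexHull ℝ s) := by
  rcases s.eq_empty_or_nonempty with rfl | ⟨x0, hx0⟩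
  · simp
  set N := Module.finrank ℝ E + 1 with hN
  have himg : convexHull ℝ s =
      (fun p : (Fin N → ℝ) × (Fin N → E) => ∑ i, p.1 i • p.2 i) ''
        (stdSimplex ℝ (Fin N) ×ˢ Set.pi Set.univ fun _ => s) := by
    apply Set.Subset.antisymm
    · intro x hx
      rw [convexHull_eq_union] at hx
      simp only [Set.mem_iUnion, exists_prop] at hx
      obtain ⟨t, hts, hai, hxt⟩ := hx
      rw [t.convexHull_eq] at hxt
      obtain ⟨w, hw0, hw1, hwx⟩ := hxt
      have hcard : t.card ≤ N := by
        have h1 := hai.card_le_finrank_succ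
        rw [Fintype.card_coe] at h1
        exact h1.trans (Nat.add_le_add_right (Submodule.finrank_le _) 1)
      set e : Fin t.card ≃ {x // x ∈ t} := t.equivFin.symm with he
      refine ⟨(fun i => if h : (i : ℕ) < t.card then w (e ⟨i, h⟩) else 0,
        fun i => if h : (i : ℕ) < t.card then (e ⟨i, h⟩ : E) else x0), ⟨⟨?_, ?_⟩, ?_⟩, ?_⟩
      · intro i
        dsimp only
        split
        · exact hw0 _ (e _).2
        · exact le_refl 0
      · show (∑ i : Fin N, if h : (i : ℕ) < t.card then w (e ⟨i, h⟩) else 0) = 1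
        rw [pad_sum hcard (fun i => w (e i)), Equiv.sum_comp e (fun a => w (a : E)),
          Finset.sum_coe_sort t w]
        exact hw1
      · intro i _
        dsimp only
        split
        · exact hts (e _).2
        · exact hx0
      · show (∑ i : Fin N, (if h : (i : ℕ) < t.card then w (e ⟨i, h⟩) else 0) •
            (if h : (i : ℕ) < t.card then ((e ⟨i, h⟩ : E)) else x0)) = x
        have : ∀ i : Fin N,
            (if h : (i : ℕ) < t.card then w (e ⟨i, h⟩) else 0) •
              (if h : (i : ℕ) < t.card then ((e ⟨i, h⟩ : E)) else x0)
            = (if h : (i : ℕ) < t.card then w (e ⟨i, h⟩) • ((e ⟨i, h⟩ : E)) else 0) := by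
          intro i
          by_cases h : (i : ℕ) < t.card <;> simp [h]
        rw [Finset.sum_congr rfl fun i _ => this i,
          pad_sum hcard (fun i => w (e i) • ((e i : E))),
          Equiv.sum_comp e (fun a : {x // x ∈ t} => w (a : E) • (a : E)),
          Finset.sum_coe_sort t (fun y => w y • y)]
        rw [← hwx, Finset.centerMass_eq_of_sum_1 t id hw1]
        rfl
    · rintro _ ⟨⟨wv, zv⟩, ⟨hw, hz⟩, rfl⟩
      exact mem_convexHull_of_exists_fintype wv zv hw.1 hw.2
        (fun i => hz i (Set.mem_univ _)) rfl
  rw [himg]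
  refine ((IsCompact.prod (isCompact_stdSimplex (𝕜 := ℝ) (ι := Fin N)) (isCompact_univ_pi fun _ => hs)).image ?_)
  exact continuous_finset_sum _ fun i _ =>
    ((continuous_apply i).comp continuous_fst).smul ((continuous_apply i).comp continuous_snd)

noncomputable instance momFintype (n d : ℕ) : Fintype {α : Fin n → ℕ // (∑ j, α j) ≤ d} := by
  apply Fintype.ofInjective (fun a : {α : Fin n → ℕ // (∑ j, α j) ≤ d} =>
    (fun j => (⟨a.1 j, Nat.lt_succ_of_le (le_trans
      (Finset.single_le_sum (fun k _ => Nat.zero_le (a.1 k)) (Finset.mem_univ j)) a.2)⟩ :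
      Fin (d+1))))
  intro a b hab
  ext j
  exact congrArg Fin.val (congrFun hab j)

/-- The vector of monomials of degree at most `d`. -/
noncomputable def vmap (n d : ℕ) (x : Fin n → ℝ) : {α : Fin n → ℕ // (∑ j, α j) ≤ d} → ℝ :=
  fun i => ∏ j, x j ^ (i.1 j)

lemma vmap_continuous (n d : ℕ) : Continuous (vmap n d) := by
  apply continuous_pi
  intro i
  exact continuous_finset_prod _ fun j _ => (continuous_apply j).pow _

/-- the generating set for the compact convex moment body -/
def GSet (n d : ℕ) (K : Set (Fin n → ℝ)) (M : ℝ) : Set ({α : Fin n → ℕ // (∑ j, α j) ≤ d} → ℝ) :=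
  (fun q : ℝ × (Fin n → ℝ) => q.1 • vmap n d q.2) '' (Set.Icc (0:ℝ) M ×ˢ K) ∪ {0}

lemma isCompact_GSet (n d : ℕ) {K : Set (Fin n → ℝ)} (hK : IsCompact K) (M : ℝ) :
    IsCompact (GSet n d K M) :=
  ((isCompact_Icc.prod hK).image
    (continuous_fst.smul ((vmap_continuous n d).comp continuous_snd))).union isCompact_singleton

/-- Forward direction: moment vectors of measures with bounded mass lie in the hull. -/
lemma moment_mem_hull (n d : ℕ) {K : Set (Fin n → ℝ)} (hK : IsCompact K) (M : ℝ)
    (μ : Measure (Fin n → ℝ)) [IsFiniteMeasure μ] (hμK : μ Kᶜ = 0)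
    (hint : ∀ α : Fin n → ℕ, (∑ j, α j) ≤ d → Integrable (fun x => ∏ j, x j ^ α j) μ)
    (hmass : (μ Set.univ).toReal ≤ M) :
    (fun i : {α : Fin n → ℕ // (∑ j, α j) ≤ d} => ∫ x, ∏ j, x j ^ (i.1 j) ∂μ)
      ∈ convexHull ℝ (GSet n d K M) := by
  by_cases h0 : μ Set.univ = 0
  · have hz : μ = 0 := Measure.measure_univ_eq_zero.mp h0
    have : (fun i : {α : Fin n → ℕ // (∑ j, α j) ≤ d} => ∫ x, ∏ j, x j ^ (i.1 j) ∂μ) = 0 := by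
      funext i
      rw [hz]
      simp
    rw [this]
    exact subset_convexHull ℝ _ (Or.inr rfl)
  · haveI : NeZero μ := ⟨fun h => h0 (by rw [h]; simp)⟩
    set ν := (μ Set.univ)⁻¹ • μ with hν
    haveI : IsProbabilityMeasure ν := MeasureTheory.isProbabilityMeasureSMul
    set m := (μ Set.univ).toReal with hm
    have hm0 : 0 < m := ENNReal.toReal_pos h0 (measure_ne_top μ _)
    -- integrability of vmap
    have hintv : Integrable (vmap n d) μ := by
      refine Integrable.mono'
        (integrable_finset_sum Finset.univ fun (i : {α : Fin n → ℕ // (∑ j, α j) ≤ d}) _ => ((hint i.1 i.2).norm)) ?_ ?_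
      · exact (vmap_continuous n d).aestronglyMeasurable
      · refine Filter.Eventually.of_forall fun x => ?_
        rw [pi_norm_le_iff_of_nonneg (Finset.sum_nonneg fun i _ => norm_nonneg _)]
        intro i
        exact Finset.single_le_sum (fun i _ => norm_nonneg _) (Finset.mem_univ i)
    have hintν : Integrable (vmap n d) ν :=
      hintv.smul_measure (ENNReal.inv_ne_top.2 h0)
    -- Jensen
    have havg : (∫ x, vmap n d x ∂ν) ∈ convexHull ℝ (vmap n d '' K) := by
      refine Convex.integral_mem (convex_convexHull ℝ _)
        (myIsCompact_convexHull (hK.image (vmap_continuous n d))).isClosed ?_ hintν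
      have hνK : ν Kᶜ = 0 := by
        rw [hν, Measure.smul_apply, hμK, smul_zero]
      refine (measure_mono_null ?_ hνK : _)
      intro x hx
      simp only [Set.mem_setOf_eq, Set.mem_compl_iff] at hx ⊢
      exact fun hxK => hx (subset_convexHull ℝ _ ⟨x, hxK, rfl⟩)
    have hcoord : (fun i : {α : Fin n → ℕ // (∑ j, α j) ≤ d} => ∫ x, ∏ j, x j ^ (i.1 j) ∂μ)
        = m • (∫ x, vmap n d x ∂ν) := by
      funext i
      have h1 : (∫ x, vmap n d x ∂ν) i
          = ∫ x, vmap n d x i ∂ν := by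
        have := (ContinuousLinearMap.proj (R := ℝ)
          (φ := fun _ : {α : Fin n → ℕ // (∑ j, α j) ≤ d} => ℝ) i).integral_comp_comm hintν
        exact this.symm
      have h2 : ∫ x, vmap n d x i ∂ν = m⁻¹ * ∫ x, vmap n d x i ∂μ := by
        rw [hν, integral_smul_measure, ENNReal.toReal_inv, smul_eq_mul, hm]
      simp only [Pi.smul_apply, smul_eq_mul, h1, h2]
      rw [← mul_assoc, mul_inv_cancel₀ (ne_of_gt hm0), one_mul]
      rfl
    rw [hcoord]
    have h1 := Set.smul_mem_smul_set (a := m) havg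
    rw [← convexHull_smul] at h1
    refine convexHull_mono ?_ h1
    rintro _ ⟨_, ⟨x, hxK, rfl⟩, rfl⟩
    exact Or.inl ⟨(m, x), ⟨⟨hm0.le, hmass⟩, hxK⟩, rfl⟩

/-- Backward direction: points of the hull are moment vectors of measures on `K`. -/
lemma hull_mem_moment (n d : ℕ) {K : Set (Fin n → ℝ)} (hK : IsCompact K) (M : ℝ)
    (w : {α : Fin n → ℕ // (∑ j, α j) ≤ d} → ℝ) (hw : w ∈ convexHull ℝ (GSet n d K M)) :
    ∃ μ : Measure (Fin n → ℝ), μ Kᶜ = 0 ∧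
      ∀ (α : Fin n → ℕ) (hα : (∑ j, α j) ≤ d),
        Integrable (fun x => ∏ j, x j ^ α j) μ ∧ w ⟨α, hα⟩ = ∫ x, ∏ j, x j ^ α j ∂μ := by
  rw [mem_convexHull_iff_exists_fintype] at hw
  obtain ⟨ι, hι, c, g, hc0, hc1, hgG, hsum⟩ := hw
  have hdata : ∀ i, ∃ (mi : ℝ) (xi : Fin n → ℝ), 0 ≤ mi ∧ (mi ≠ 0 → xi ∈ K) ∧
      g i = mi • vmap n d xi := by
    intro i
    rcases hgG i with ⟨⟨mq, xq⟩, ⟨hmq, hxq⟩, heq⟩ | hg0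
    · exact ⟨mq, xq, hmq.1, fun _ => hxq, heq.symm⟩
    · exact ⟨0, fun _ => 0, le_refl 0, fun h => absurd rfl h, by
        rw [Set.mem_singleton_iff.mp hg0, zero_smul]⟩
  choose mi xi hmi hxiK hgeq using hdata
  have hmeasKc : MeasurableSet Kᶜ := hK.isClosed.measurableSet.compl
  refine ⟨∑ i, ENNReal.ofReal (c i * mi i) • Measure.dirac (xi i), ?_, ?_⟩
  · rw [Measure.finset_sum_apply]
    refine Finset.sum_eq_zero fun i _ => ?_
    rw [Measure.smul_apply, smul_eq_mul]
    rcases eq_or_ne (mi i) 0 with hz | hz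
    · rw [hz, mul_zero, ENNReal.ofReal_zero, zero_mul]
    · rw [Measure.dirac_apply' _ hmeasKc,
        Set.indicator_of_notMem (by simpa using hxiK i hz), mul_zero]
  · intro α hα
    have hcont : Continuous (fun x : Fin n → ℝ => ∏ j, x j ^ α j) :=
      continuous_finset_prod _ fun j _ => (continuous_apply j).pow _
    have hintd : ∀ i, Integrable (fun x => ∏ j, x j ^ α j)
        (ENNReal.ofReal (c i * mi i) • Measure.dirac (xi i)) := by
      intro i
      refine Integrable.smul_measure ?_ ENNReal.ofReal_ne_top
      refine ⟨hcont.aestronglyMeasurable, ?_⟩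
      rw [hasFiniteIntegral_def, lintegral_dirac]
      exact ENNReal.coe_lt_top
    constructor
    · exact integrable_finset_sum_measure.2 fun i _ => hintd i
    · rw [integral_finset_sum_measure fun i _ => hintd i]
      have hval : ∀ i, ∫ x, ∏ j, x j ^ α j ∂(ENNReal.ofReal (c i * mi i) • Measure.dirac (xi i))
          = (c i * mi i) * ∏ j, xi i j ^ α j := by
        intro i
        rw [integral_smul_measure, integral_dirac,
          ENNReal.toReal_ofReal (mul_nonneg (hc0 i) (hmi i)), smul_eq_mul]
      rw [Finset.sum_congr rfl fun i _ => hval i]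
      have hw' : w ⟨α, hα⟩ = ∑ i, c i * (mi i * ∏ j, xi i j ^ α j) := by
        rw [← hsum]
        rw [Finset.sum_apply]
        refine Finset.sum_congr rfl fun i _ => ?_
        rw [Pi.smul_apply, hgeq i, Pi.smul_apply, smul_eq_mul, smul_eq_mul]
        rfl
      rw [hw']
      exact Finset.sum_congr rfl fun i _ => by ring

/-- The extension set `E_d(y,K)`: truncated moment sequences of degree `d`
(padded by zero in degrees `> d`) that admit a representing measure supported
in `K` and agree with `y` on `A`. -/
def extensionSet (n d : ℕ) (A : Finset (Fin n → ℕ)) (K : Set (Fin n → ℝ))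
    (y : (Fin n → ℕ) → ℝ) : Set ((Fin n → ℕ) → ℝ) :=
  {z | (∃ μ : Measure (Fin n → ℝ), μ Kᶜ = 0 ∧
          ∀ α : Fin n → ℕ, (∑ j, α j) ≤ d →
            Integrable (fun x => ∏ j, x j ^ α j) μ ∧
              z α = ∫ x, ∏ j, x j ^ α j ∂μ) ∧
        (∀ α ∈ A, z α = y α) ∧
        (∀ α : Fin n → ℕ, ¬ (∑ j, α j) ≤ d → z α = 0)}

/-- For compact `K`, `K`-full `ℝ[x]_A`, and `d > deg(A)`,
the set `E_d(y,K)` is a compact convex set. -/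
theorem extensionSet_convex_isCompact
    (n d : ℕ) (A : Finset (Fin n → ℕ)) (K : Set (Fin n → ℝ)) (hK : IsCompact K)
    (hfull : ∃ p : (Fin n → ℕ) → ℝ, ∀ x ∈ K, 0 < ∑ α ∈ A, p α * ∏ j, x j ^ α j)
    (hd : ∀ α ∈ A, (∑ j, α j) < d) (y : (Fin n → ℕ) → ℝ) :
    Convex ℝ (extensionSet n d A K y) ∧ IsCompact (extensionSet n d A K y) := by
  obtain ⟨p, hp⟩ := hfull
  set f : (Fin n → ℝ) → ℝ := fun x => ∑ α ∈ A, p α * ∏ j, x j ^ α j with hf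
  set S : ℝ := ∑ α ∈ A, p α * y α with hS
  set ε : ℝ := sInf (f '' K) with hε
  set M : ℝ := S / ε with hM
  set D := convexHull ℝ (GSet n d K M) with hD
  have hDcompact : IsCompact D := myIsCompact_convexHull (isCompact_GSet n d hK M)
  have key : extensionSet n d A K y =
      {z | (fun i : {α : Fin n → ℕ // (∑ j, α j) ≤ d} => z i.1) ∈ D ∧
        (∀ α ∈ A, z α = y α) ∧ (∀ α : Fin n → ℕ, ¬ (∑ j, α j) ≤ d → z α = 0)} := by
    ext z
    constructor
    · rintro ⟨⟨μ, hμK, hμint⟩, hzy, hz0⟩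
      refine ⟨?_, hzy, hz0⟩
      have h1 : Integrable (fun _ : Fin n → ℝ => (1:ℝ)) μ := by
        have := (hμint 0 (by simp)).1
        simpa using this
      haveI : IsFiniteMeasure μ := (integrable_const_iff.mp h1).resolve_left one_ne_zero
      have hmass : (μ Set.univ).toReal ≤ M := by
        rcases eq_or_ne (μ Set.univ) 0 with h0 | h0
        · have hmu0 : μ = 0 := Measure.measure_univ_eq_zero.mp h0
          have hS0 : S = 0 := by
            rw [hS]
            refine Finset.sum_eq_zero fun α hα => ?_
            rw [← hzy α hα, (hμint α (hd α hα).le).2, hmu0, integral_zero_measure, mul_zero]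
          rw [h0]
          simp [hM, hS0]
        · have hKne : K.Nonempty := by
            refine nonempty_of_measure_ne_zero (μ := μ) (s := K) (fun hKz => h0 ?_)
            have hle : μ Set.univ ≤ μ K + μ Kᶜ := by
              rw [← Set.union_compl_self K]
              exact measure_union_le _ _
            rw [hKz, hμK, add_zero] at hle
            exact le_antisymm hle zero_le
          have hfc : Continuous f := continuous_finset_sum _ fun α _ =>
            continuous_const.mul (continuous_finset_prod _ fun j _ => (continuous_apply j).pow _)
          obtain ⟨x0, hx0K, hminx⟩ := hK.exists_isMinOn hKne hfc.continuousOn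
          have hεeq : ε = f x0 := by
            rw [hε]
            exact IsLeast.csInf_eq ⟨⟨x0, hx0K, rfl⟩, by rintro b ⟨x, hx, rfl⟩; exact hminx hx⟩
          have hε0 : 0 < ε := by rw [hεeq]; exact hp x0 hx0K
          have hintmono : ∀ α ∈ A, Integrable (fun x => p α * ∏ j, x j ^ α j) μ :=
            fun α hα => ((hμint α (hd α hα).le).1.const_mul (p α))
          have hfint : Integrable f μ := integrable_finset_sum A hintmono
          have hfeq : ∫ x, f x ∂μ = S := by
            rw [hf]
            calc ∫ x, (∑ α ∈ A, p α * ∏ j, x j ^ α j) ∂μ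
                = ∑ α ∈ A, ∫ x, p α * ∏ j, x j ^ α j ∂μ := integral_finset_sum A hintmono
              _ = S := by
                  rw [hS]
                  refine Finset.sum_congr rfl fun α hα => ?_
                  rw [integral_const_mul, ← (hμint α (hd α hα).le).2, hzy α hα]
          have hlow : ∀ᵐ x ∂μ, ε ≤ f x := by
            refine ae_iff.2 (measure_mono_null ?_ hμK)
            intro x hx
            simp only [Set.mem_setOf_eq, not_le] at hx
            simp only [Set.mem_compl_iff]
            intro hxK
            rw [hεeq] at hx
            exact absurd (hminx hxK) (not_le.2 hx)
          have hmono := integral_mono_ae (integrable_const ε) hfint hlow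
          rw [integral_const, hfeq] at hmono
          rw [hM, le_div_iff₀ hε0]
          simpa [smul_eq_mul, Measure.real] using hmono
      have hz' : (fun i : {α : Fin n → ℕ // (∑ j, α j) ≤ d} => z i.1)
          = fun i : {α : Fin n → ℕ // (∑ j, α j) ≤ d} => ∫ x, ∏ j, x j ^ (i.1 j) ∂μ :=
        funext fun i => (hμint i.1 i.2).2
      rw [hz']
      exact moment_mem_hull n d hK M μ hμK (fun α hα => (hμint α hα).1) hmass
    · rintro ⟨hzD, hzy, hz0⟩
      obtain ⟨μ, hμK, hμ⟩ := hull_mem_moment n d hK M _ hzD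
      exact ⟨⟨μ, hμK, fun α hα => ⟨(hμ α hα).1, (hμ α hα).2⟩⟩, hzy, hz0⟩
  constructor
  · rw [key]
    intro z1 h1 z2 h2 a b ha hb hab
    simp only [Set.mem_setOf_eq] at h1 h2 ⊢
    refine ⟨?_, ?_, ?_⟩
    · exact (convex_convexHull ℝ _) h1.1 h2.1 ha hb hab
    · intro α hα
      simp only [Pi.add_apply, Pi.smul_apply, smul_eq_mul, h1.2.1 α hα, h2.2.1 α hα]
      rw [← add_mul, hab, one_mul]
    · intro α hα
      simp only [Pi.add_apply, Pi.smul_apply, smul_eq_mul, h1.2.2 α hα, h2.2.2 α hα,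
        mul_zero, add_zero]
  · rw [key]
    have hclosed : IsClosed {z : (Fin n → ℕ) → ℝ |
        (fun i : {α : Fin n → ℕ // (∑ j, α j) ≤ d} => z i.1) ∈ D ∧
        (∀ α ∈ A, z α = y α) ∧ (∀ α : Fin n → ℕ, ¬ (∑ j, α j) ≤ d → z α = 0)} := by
      rw [Set.setOf_and, Set.setOf_and]
      refine IsClosed.inter ?_ (IsClosed.inter ?_ ?_)
      · exact hDcompact.isClosed.preimage (continuous_pi fun i => continuous_apply i.1)
      · have : {z : (Fin n → ℕ) → ℝ | ∀ α ∈ A, z α = y α}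
            = ⋂ α ∈ A, {z : (Fin n → ℕ) → ℝ | z α = y α} := by ext z; simp
        rw [this]
        exact isClosed_biInter fun α _ => isClosed_eq (continuous_apply α) continuous_const
      · have : {z : (Fin n → ℕ) → ℝ | ∀ α : Fin n → ℕ, ¬ (∑ j, α j) ≤ d → z α = 0}
            = ⋂ α : Fin n → ℕ, {z : (Fin n → ℕ) → ℝ | ¬ (∑ j, α j) ≤ d → z α = 0} := by
          ext z; simp
        rw [this]
        refine isClosed_iInter fun α => ?_
        by_cases h : (∑ j, α j) ≤ d
        · have : {z : (Fin n → ℕ) → ℝ | ¬ (∑ j, α j) ≤ d → z α = 0} = Set.univ := by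
            ext z; simp [h]
          rw [this]; exact isClosed_univ
        · have : {z : (Fin n → ℕ) → ℝ | ¬ (∑ j, α j) ≤ d → z α = 0}
              = {z : (Fin n → ℕ) → ℝ | z α = 0} := by ext z; simp [h]
          rw [this]; exact isClosed_eq (continuous_apply α) continuous_const
    set C : (Fin n → ℕ) → Set ℝ := fun α =>
      if h : (∑ j, α j) ≤ d then
        (fun wv : {α : Fin n → ℕ // (∑ j, α j) ≤ d} → ℝ => wv ⟨α, h⟩) '' D else {0} with hC
    have hCc : ∀ α, IsCompact (C α) := by
      intro α
      rw [hC]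
      dsimp only
      split
      · exact hDcompact.image (continuous_apply _)
      · exact isCompact_singleton
    have hsub : {z : (Fin n → ℕ) → ℝ |
        (fun i : {α : Fin n → ℕ // (∑ j, α j) ≤ d} => z i.1) ∈ D ∧
        (∀ α ∈ A, z α = y α) ∧ (∀ α : Fin n → ℕ, ¬ (∑ j, α j) ≤ d → z α = 0)}
          ⊆ Set.pi Set.univ C := by
      intro z hz α _
      rw [hC]
      dsimp only
      split
      case isTrue h => exact ⟨_, hz.1, rfl⟩
      case isFalse h => exact Set.mem_singleton_iff.2 (hz.2.2 α h)
    exact IsCompact.of_isClosed_subset (isCompact_univ_pi hCc) hclosed hsub
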